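/- For every n > 1 there exist a set P of Θ(n) points and a set L of Θ(n) lines in the plane such that the incidence graph of (P, L) contains no cycle of length 8 of the form ℓ₁p₁ℓ₂p₂ℓ₃p₃ℓ₄p₄ with all four intersection points distinct (i.e., (P, L) contains no configuration of 4 lines and 4 points forming a 'grid' K_{2,2}-pattern with 4 distinct intersection points), and the number of incidences |I(P, L)| is at least Ω(n^{1 + 1/14}). -/

import Mathlib

open Finset

/-- no nontrivial 3-term relation with coefficients bounded by `k` -/
def T3 (k : ℕ) (A : Finset ℕ) : Prop :=
  ∀ d1 d2 d3 : ℤ, d1 ≠ 0 → d2 ≠ 0 → d3 ≠ 0 →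
    |d1| ≤ k → |d2| ≤ k → |d3| ≤ k → d1 + d2 + d3 = 0 →
    ∀ a1 ∈ A, ∀ a2 ∈ A, ∀ a3 ∈ A, a1 ≠ a2 → a1 ≠ a3 → a2 ≠ a3 →
      d1 * a1 + d2 * a2 + d3 * a3 ≠ 0

/-- no nontrivial 4-term relation with coefficients bounded by `k` -/
def T4 (k : ℕ) (A : Finset ℕ) : Prop :=
  ∀ c1 c2 c3 c4 : ℤ, c1 ≠ 0 → c2 ≠ 0 → c3 ≠ 0 → c4 ≠ 0 →
    |c1| ≤ k → |c2| ≤ k → |c3| ≤ k → |c4| ≤ k → c1 + c2 + c3 + c4 = 0 →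
    ∀ a1 ∈ A, ∀ a2 ∈ A, ∀ a3 ∈ A, ∀ a4 ∈ A,
      a1 ≠ a2 → a1 ≠ a3 → a1 ≠ a4 → a2 ≠ a3 → a2 ≠ a4 → a3 ≠ a4 →
      c1 * a1 + c2 * a2 + c3 * a3 + c4 * a4 ≠ 0

noncomputable def bad4 (k : ℕ) (A : Finset ℕ) : Finset ℕ :=
  ((Icc (-(k:ℤ)) k ×ˢ Icc (-(k:ℤ)) k ×ˢ Icc (-(k:ℤ)) k ×ˢ Icc (-(k:ℤ)) k) ×ˢ (A ×ˢ A ×ˢ A)).image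
    (fun q => ((-(q.1.2.1 * q.2.1 + q.1.2.2.1 * q.2.2.1 + q.1.2.2.2 * q.2.2.2)) / q.1.1).toNat)

noncomputable def bad3 (k : ℕ) (A : Finset ℕ) : Finset ℕ :=
  ((Icc (-(k:ℤ)) k ×ˢ Icc (-(k:ℤ)) k ×ˢ Icc (-(k:ℤ)) k) ×ˢ (A ×ˢ A)).image
    (fun q => ((-(q.1.2.1 * q.2.1 + q.1.2.2 * q.2.2)) / q.1.1).toNat)

lemma mem_bad4 {k : ℕ} {A : Finset ℕ} {x : ℕ} {c0 c1 c2 c3 : ℤ} {a1 a2 a3 : ℕ}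
    (h0 : |c0| ≤ k) (h1 : |c1| ≤ k) (h2 : |c2| ≤ k) (h3 : |c3| ≤ k)
    (hc0 : c0 ≠ 0) (ha1 : a1 ∈ A) (ha2 : a2 ∈ A) (ha3 : a3 ∈ A)
    (heq : c0 * x + c1 * a1 + c2 * a2 + c3 * a3 = 0) : x ∈ bad4 k A := by
  rw [bad4, mem_image]
  refine ⟨((c0, c1, c2, c3), (a1, a2, a3)), ?_, ?_⟩
  · simp only [mem_product, mem_Icc]
    rw [abs_le] at h0 h1 h2 h3
    exact ⟨⟨⟨h0.1, h0.2⟩, ⟨h1.1, h1.2⟩, ⟨h2.1, h2.2⟩, ⟨h3.1, h3.2⟩⟩, ha1, ha2, ha3⟩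
  · have : -(c1 * a1 + c2 * a2 + c3 * a3) = c0 * x := by linarith
    simp only [this]
    rw [Int.mul_ediv_cancel_left _ hc0]
    exact Int.toNat_natCast x

lemma mem_bad3 {k : ℕ} {A : Finset ℕ} {x : ℕ} {c0 c1 c2 : ℤ} {a1 a2 : ℕ}
    (h0 : |c0| ≤ k) (h1 : |c1| ≤ k) (h2 : |c2| ≤ k)
    (hc0 : c0 ≠ 0) (ha1 : a1 ∈ A) (ha2 : a2 ∈ A)
    (heq : c0 * x + c1 * a1 + c2 * a2 = 0) : x ∈ bad3 k A := by
  rw [bad3, mem_image]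
  refine ⟨((c0, c1, c2), (a1, a2)), ?_, ?_⟩
  · simp only [mem_product, mem_Icc]
    rw [abs_le] at h0 h1 h2
    exact ⟨⟨⟨h0.1, h0.2⟩, ⟨h1.1, h1.2⟩, ⟨h2.1, h2.2⟩⟩, ha1, ha2⟩
  · have : -(c1 * a1 + c2 * a2) = c0 * x := by linarith
    simp only [this]
    rw [Int.mul_ediv_cancel_left _ hc0]
    exact Int.toNat_natCast x

lemma card_bad4 (k : ℕ) (A : Finset ℕ) : (bad4 k A).card ≤ (2*k+1)^4 * A.card^3 := by
  refine le_trans (card_image_le) ?_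
  have hI : (Icc (-(k:ℤ)) k).card = 2*k+1 := by
    rw [Int.card_Icc]; omega
  simp only [card_product, hI]; exact le_of_eq (by ring)

lemma card_bad3 (k : ℕ) (A : Finset ℕ) : (bad3 k A).card ≤ (2*k+1)^3 * A.card^2 := by
  refine le_trans (card_image_le) ?_
  have hI : (Icc (-(k:ℤ)) k).card = 2*k+1 := by
    rw [Int.card_Icc]; omega
  simp only [card_product, hI]; exact le_of_eq (by ring)

lemma T3_insert {k : ℕ} {A : Finset ℕ} {x : ℕ} (h3 : T3 k A)
    (hx : x ∉ bad3 k A) : T3 k (insert x A) := by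
  intro d1 d2 d3 hd1 hd2 hd3 hb1 hb2 hb3 hsum a1 ha1 a2 ha2 a3 ha3 h12 h13 h23 heq
  have hmem : ∀ a, a ∈ insert x A → a ≠ x → a ∈ A :=
    fun a ha hne => (mem_insert.mp ha).resolve_left hne
  by_cases e1 : a1 = x
  · subst e1
    exact hx (mem_bad3 hb1 hb2 hb3 hd1 (hmem a2 ha2 (Ne.symm h12)) (hmem a3 ha3 (Ne.symm h13))
      (by linarith))
  by_cases e2 : a2 = x
  · subst e2
    exact hx (mem_bad3 hb2 hb1 hb3 hd2 (hmem a1 ha1 e1) (hmem a3 ha3 (Ne.symm h23))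
      (by linarith))
  by_cases e3 : a3 = x
  · subst e3
    exact hx (mem_bad3 hb3 hb1 hb2 hd3 (hmem a1 ha1 e1) (hmem a2 ha2 e2) (by linarith))
  exact h3 d1 d2 d3 hd1 hd2 hd3 hb1 hb2 hb3 hsum a1 (hmem a1 ha1 e1) a2 (hmem a2 ha2 e2)
    a3 (hmem a3 ha3 e3) h12 h13 h23 heq

lemma T4_insert {k : ℕ} {A : Finset ℕ} {x : ℕ} (h4 : T4 k A)
    (hx : x ∉ bad4 k A) : T4 k (insert x A) := by
  intro c1 c2 c3 c4 hd1 hd2 hd3 hd4 hb1 hb2 hb3 hb4 hsum a1 ha1 a2 ha2 a3 ha3 a4 ha4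
    h12 h13 h14 h23 h24 h34 heq
  have hmem : ∀ a, a ∈ insert x A → a ≠ x → a ∈ A :=
    fun a ha hne => (mem_insert.mp ha).resolve_left hne
  by_cases e1 : a1 = x
  · subst e1
    exact hx (mem_bad4 hb1 hb2 hb3 hb4 hd1 (hmem a2 ha2 (Ne.symm h12))
      (hmem a3 ha3 (Ne.symm h13)) (hmem a4 ha4 (Ne.symm h14)) (by linarith))
  by_cases e2 : a2 = x
  · subst e2
    exact hx (mem_bad4 hb2 hb1 hb3 hb4 hd2 (hmem a1 ha1 e1)
      (hmem a3 ha3 (Ne.symm h23)) (hmem a4 ha4 (Ne.symm h24)) (by linarith))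
  by_cases e3 : a3 = x
  · subst e3
    exact hx (mem_bad4 hb3 hb1 hb2 hb4 hd3 (hmem a1 ha1 e1) (hmem a2 ha2 e2)
      (hmem a4 ha4 (Ne.symm h34)) (by linarith))
  by_cases e4 : a4 = x
  · subst e4
    exact hx (mem_bad4 hb4 hb1 hb2 hb3 hd4 (hmem a1 ha1 e1) (hmem a2 ha2 e2)
      (hmem a3 ha3 e3) (by linarith))
  exact h4 c1 c2 c3 c4 hd1 hd2 hd3 hd4 hb1 hb2 hb3 hb4 hsum a1 (hmem a1 ha1 e1)
    a2 (hmem a2 ha2 e2) a3 (hmem a3 ha3 e3) a4 (hmem a4 ha4 e4)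
    h12 h13 h14 h23 h24 h34 heq

lemma greedy (k t : ℕ) (hk : 1 ≤ k) :
    ∃ A : Finset ℕ, A ⊆ range (250 * k^4 * t^3 + 1) ∧ A.card = t ∧ T3 k A ∧ T4 k A := by
  set N := 250 * k^4 * t^3 + 1 with hN
  suffices h : ∀ s, s ≤ t → ∃ A : Finset ℕ, A ⊆ range N ∧ A.card = s ∧ T3 k A ∧ T4 k A by
    exact h t le_rfl
  intro s hs
  induction s with
  | zero =>
    refine ⟨∅, empty_subset _, card_empty, ?_, ?_⟩
    · intro _ _ _ _ _ _ _ _ _ _ a ha; simp at ha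
    · intro _ _ _ _ _ _ _ _ _ _ _ _ _ a ha; simp at ha
  | succ s ih =>
    obtain ⟨A, hsub, hcard, h3, h4⟩ := ih (le_trans (Nat.le_succ s) hs)
    have hslt : s < t := hs
    -- count bad elements
    have hb4 : (bad4 k A).card ≤ 81 * k^4 * t^3 := by
      refine le_trans (card_bad4 k A) ?_
      have h1 : (2*k+1)^4 ≤ (3*k)^4 := Nat.pow_le_pow_left (by omega) 4
      have h2 : A.card^3 ≤ t^3 := Nat.pow_le_pow_left (by omega) 3
      calc (2*k+1)^4 * A.card^3 ≤ (3*k)^4 * t^3 := Nat.mul_le_mul h1 h2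
        _ = 81 * k^4 * t^3 := by ring
    have hb3 : (bad3 k A).card ≤ 27 * k^4 * t^3 := by
      refine le_trans (card_bad3 k A) ?_
      have h1 : (2*k+1)^3 ≤ (3*k)^3 := Nat.pow_le_pow_left (by omega) 3
      have h2 : A.card^2 ≤ t^2 := Nat.pow_le_pow_left (by omega) 2
      calc (2*k+1)^3 * A.card^2 ≤ (3*k)^3 * t^2 := Nat.mul_le_mul h1 h2
        _ = 27 * k^3 * t^2 := by ring
        _ ≤ 27 * k^4 * t^3 := by
            have : k^3 * t^2 ≤ k^4 * t^3 := by
              calc k^3 * t^2 = (k^3 * t^2) * 1 := by ring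
                _ ≤ (k^3 * t^2) * (k * t) := Nat.mul_le_mul_left _ (by nlinarith)
                _ = k^4 * t^3 := by ring
            linarith
    have hA : A.card ≤ k^4 * t^3 := by
      have ht1 : 1 ≤ t := by omega
      calc A.card ≤ t := by omega
        _ = 1 * (t * 1 * 1) := by ring
        _ ≤ k^4 * (t * t * t) := by
            exact Nat.mul_le_mul (Nat.one_le_pow _ _ hk) (by nlinarith)
        _ = k^4 * t^3 := by ring
    have hu4 : 81 * k^4 * t^3 = 81 * (k^4*t^3) := by ring
    have hu3 : 27 * k^4 * t^3 = 27 * (k^4*t^3) := by ring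
    have hNu : N = 250 * (k^4*t^3) + 1 := by rw [hN]; ring
    rw [hu4] at hb4
    rw [hu3] at hb3
    have hBad : (A ∪ bad4 k A ∪ bad3 k A).card < N := by
      have hcu := card_union_le (A ∪ bad4 k A) (bad3 k A)
      have hcu2 := card_union_le A (bad4 k A)
      omega
    have hnonempty : (range N \ (A ∪ bad4 k A ∪ bad3 k A)).Nonempty := by
      rw [← card_pos]
      have h1 := le_card_sdiff (A ∪ bad4 k A ∪ bad3 k A) (range N)
      rw [card_range] at h1
      omega
    obtain ⟨x, hx⟩ := hnonempty
    rw [mem_sdiff] at hx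
    obtain ⟨hxN, hxBad⟩ := hx
    have hxA : x ∉ A := fun h => hxBad (mem_union_left _ (mem_union_left _ h))
    have hx4 : x ∉ bad4 k A := fun h => hxBad (mem_union_left _ (mem_union_right _ h))
    have hx3 : x ∉ bad3 k A := fun h => hxBad (mem_union_right _ h)
    refine ⟨insert x A, ?_, ?_, T3_insert h3 hx3, T4_insert h4 hx4⟩
    · exact insert_subset hxN hsub
    · rw [card_insert_of_notMem hxA, hcard]

lemma KS {k : ℕ} {A : Finset ℕ} (h3 : T3 (2*k) A) (h4 : T4 (2*k) A)
    {c1 c2 c3 c4 : ℤ} (hd1 : c1 ≠ 0) (hd2 : c2 ≠ 0) (hd3 : c3 ≠ 0) (hd4 : c4 ≠ 0)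
    (hb1 : |c1| ≤ k) (hb2 : |c2| ≤ k) (hb3 : |c3| ≤ k) (hb4 : |c4| ≤ k)
    (hsum : c1 + c2 + c3 + c4 = 0)
    {a1 a2 a3 a4 : ℕ} (ha1 : a1 ∈ A) (ha2 : a2 ∈ A) (ha3 : a3 ∈ A) (ha4 : a4 ∈ A)
    (heq : c1*a1 + c2*a2 + c3*a3 + c4*a4 = 0) :
    a1 = a2 ∨ a2 = a3 ∨ a3 = a4 ∨ a4 = a1 ∨ (a1 = a3 ∧ a2 = a4 ∧ c1 + c3 = 0) := by
  have hk2 : ((2*k : ℕ) : ℤ) = 2*(k:ℤ) := by push_cast; ring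
  by_cases h12 : a1 = a2
  · exact Or.inl h12
  by_cases h23 : a2 = a3
  · exact Or.inr (Or.inl h23)
  by_cases h34 : a3 = a4
  · exact Or.inr (Or.inr (Or.inl h34))
  by_cases h41 : a4 = a1
  · exact Or.inr (Or.inr (Or.inr (Or.inl h41)))
  by_cases h13 : a1 = a3
  · by_cases h24 : a2 = a4
    · by_cases hc : c1 + c3 = 0
      · exact Or.inr (Or.inr (Or.inr (Or.inr ⟨h13, h24, hc⟩)))
      · subst h13; subst h24
        have h0 : (c1+c3) * ((a1:ℤ) - a2) = 0 := by linear_combination heq - (a2:ℤ) * hsum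
        rcases mul_eq_zero.mp h0 with h|h
        · exact absurd h hc
        · exact Or.inl (by exact_mod_cast (by linarith : (a1:ℤ) = a2))
    · by_cases hc : c1 + c3 = 0
      · subst h13
        have hc24 : c2 + c4 = 0 := by linarith
        have h0 : c2 * ((a2:ℤ) - a4) = 0 := by linear_combination heq - (a1:ℤ)*hsum - (a4:ℤ)*hc24 + (a1:ℤ)*hc24
        rcases mul_eq_zero.mp h0 with h|h
        · exact absurd h hd2
        · exact absurd (by exact_mod_cast (by linarith : (a2:ℤ) = a4)) h24
      · subst h13
        exfalso
        refine h3 (c1+c3) c2 c4 hc hd2 hd4 ?_ ?_ ?_ (by linarith)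
          a1 ha1 a2 ha2 a4 ha4 h12 (fun h => h41 h.symm) h24 (by linear_combination heq)
        · rw [hk2]
          calc |c1+c3| ≤ |c1| + |c3| := abs_add_le _ _
            _ ≤ 2*(k:ℤ) := by linarith
        · rw [hk2]; linarith [abs_nonneg c2, abs_nonneg c4]
        · rw [hk2]; linarith [abs_nonneg c2, abs_nonneg c4]
  · by_cases h24 : a2 = a4
    · by_cases hc : c2 + c4 = 0
      · subst h24
        have hc13 : c1 + c3 = 0 := by linarith
        have h0 : c1 * ((a1:ℤ) - a3) = 0 := by linear_combination heq - (a2:ℤ)*hsum - (a3:ℤ)*hc13 + (a2:ℤ)*hc13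
        rcases mul_eq_zero.mp h0 with h|h
        · exact absurd h hd1
        · exact absurd (by exact_mod_cast (by linarith : (a1:ℤ) = a3)) h13
      · subst h24
        exfalso
        refine h3 (c2+c4) c1 c3 hc hd1 hd3 ?_ ?_ ?_ (by linarith)
          a2 ha2 a1 ha1 a3 ha3 (fun h => h12 h.symm) h23 h13 (by linear_combination heq)
        · rw [hk2]
          calc |c2+c4| ≤ |c2| + |c4| := abs_add_le _ _
            _ ≤ 2*(k:ℤ) := by linarith
        · rw [hk2]; linarith [abs_nonneg c1, abs_nonneg c3]
        · rw [hk2]; linarith [abs_nonneg c1, abs_nonneg c3]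
    · exfalso
      refine h4 c1 c2 c3 c4 hd1 hd2 hd3 hd4 ?_ ?_ ?_ ?_ hsum
        a1 ha1 a2 ha2 a3 ha3 a4 ha4 h12 h13 (fun h => h41 h.symm) h23 h24 h34 heq
        <;> rw [hk2] <;> linarith [abs_nonneg c1, abs_nonneg c2, abs_nonneg c3, abs_nonneg c4]

def esid (p i : ℕ) : ℕ := 2*p*i + i^2 % p

lemma esid_lt {p i : ℕ} (hp : 0 < p) (hi : i < p) : esid p i < 2*p^2 := by
  have h1 : 2*p*i ≤ 2*p*(p-1) := Nat.mul_le_mul_left _ (by omega)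
  have h2 : i^2 % p < p := Nat.mod_lt _ hp
  have h3 : 2*p*(p-1) + p < 2*p^2 := by
    obtain ⟨q, rfl⟩ : ∃ q, p = q + 1 := ⟨p-1, by omega⟩
    simp only [Nat.add_sub_cancel] at h1 ⊢
    nlinarith
  unfold esid; omega

lemma sidon {p : ℕ} (hp : p.Prime) (hodd : 2 < p) {i j k l : ℕ}
    (hi : i < p) (hj : j < p) (hk : k < p) (hl : l < p)
    (h : esid p i + esid p j = esid p k + esid p l) :
    (i = k ∧ j = l) ∨ (i = l ∧ j = k) := by
  haveI : Fact p.Prime := ⟨hp⟩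
  have hp0 : 0 < p := hp.pos
  have hri : i^2 % p < p := Nat.mod_lt _ hp0
  have hrj : j^2 % p < p := Nat.mod_lt _ hp0
  have hrk : k^2 % p < p := Nat.mod_lt _ hp0
  have hrl : l^2 % p < p := Nat.mod_lt _ hp0
  have hz : 2*(p:ℤ)*i + (i^2 % p : ℕ) + (2*(p:ℤ)*j + (j^2 % p : ℕ))
      = 2*(p:ℤ)*k + (k^2 % p : ℕ) + (2*(p:ℤ)*l + (l^2 % p : ℕ)) := by
    exact_mod_cast congrArg (Nat.cast : ℕ → ℤ) h
  have hdvd : (2*(p:ℤ)) ∣ (((k^2 % p : ℕ) : ℤ) + ((l^2 % p : ℕ) : ℤ)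
      - ((i^2 % p : ℕ) : ℤ) - ((j^2 % p : ℕ) : ℤ)) :=
    ⟨(i:ℤ)+j-k-l, by linarith⟩
  have hr0 : ((k^2 % p : ℕ) : ℤ) + ((l^2 % p : ℕ) : ℤ)
      - ((i^2 % p : ℕ) : ℤ) - ((j^2 % p : ℕ) : ℤ) = 0 := by
    refine Int.eq_zero_of_abs_lt_dvd hdvd ?_
    rw [abs_lt]
    constructor <;> omega
  have hr : i^2 % p + j^2 % p = k^2 % p + l^2 % p := by omega
  have hsum : i + j = k + l := by
    have h2 : 2*(p:ℤ)*((i:ℤ)+j) = 2*(p:ℤ)*((k:ℤ)+l) := by linarith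
    have := mul_left_cancel₀ (a := 2*(p:ℤ)) (by positivity) h2
    omega
  -- pass to ZMod p
  have hq : ((i:ZMod p))^2 + (j:ZMod p)^2 = (k:ZMod p)^2 + (l:ZMod p)^2 := by
    have h0 := congrArg (Nat.cast : ℕ → ZMod p) hr
    push_cast at h0
    rw [ZMod.natCast_mod, ZMod.natCast_mod, ZMod.natCast_mod, ZMod.natCast_mod] at h0
    push_cast at h0
    exact h0
  have hs : (i:ZMod p) + j = (k:ZMod p) + l := by exact_mod_cast congrArg (Nat.cast : ℕ → ZMod p) hsum
  have key : (((i:ZMod p) - j) - ((k:ZMod p) - l)) * (((i:ZMod p) - j) + ((k:ZMod p) - l)) = 0 := by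
    linear_combination 2*hq - ((i:ZMod p)+j+k+l)*hs
  have hp2 : ¬ ((p:ℤ) ∣ 2) := by
    intro hd
    have := Int.le_of_dvd (by norm_num) hd
    omega
  rcases mul_eq_zero.mp key with hcase|hcase
  · left
    have hz2 : (((i:ℤ) - j - ((k:ℤ) - l) : ℤ) : ZMod p) = 0 := by push_cast; linear_combination hcase
    have hdd : (p:ℤ) ∣ ((i:ℤ) - j - ((k:ℤ) - l)) := (ZMod.intCast_zmod_eq_zero_iff_dvd _ _).mp hz2
    have heq2 : (i:ℤ) - j - ((k:ℤ) - l) = 2*((i:ℤ)-k) := by omega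
    rw [heq2] at hdd
    rcases ((Nat.prime_iff_prime_int.mp hp).dvd_mul.mp hdd) with h2|h2
    · exact absurd h2 hp2
    · have : (i:ℤ) - k = 0 := Int.eq_zero_of_abs_lt_dvd h2 (by rw [abs_lt]; omega)
      omega
  · right
    have hz2 : (((i:ℤ) - j + ((k:ℤ) - l) : ℤ) : ZMod p) = 0 := by push_cast; linear_combination hcase
    have hdd : (p:ℤ) ∣ ((i:ℤ) - j + ((k:ℤ) - l)) := (ZMod.intCast_zmod_eq_zero_iff_dvd _ _).mp hz2
    have heq2 : (i:ℤ) - j + ((k:ℤ) - l) = 2*((i:ℤ)-l) := by omega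
    rw [heq2] at hdd
    rcases ((Nat.prime_iff_prime_int.mp hp).dvd_mul.mp hdd) with h2|h2
    · exact absurd h2 hp2
    · have : (i:ℤ) - l = 0 := Int.eq_zero_of_abs_lt_dvd h2 (by rw [abs_lt]; omega)
      omega

lemma esid_inj {p : ℕ} (hp : p.Prime) (hodd : 2 < p) {i j : ℕ}
    (hi : i < p) (hj : j < p) (h : esid p i = esid p j) : i = j := by
  rcases sidon hp hodd hi hi hj hi (by omega) with ⟨h1, _⟩|⟨h1, h2⟩
  · exact h1
  · omega

lemma fin4_ne (i : Fin 4) : i ≠ i + 1 := by fin_cases i <;> decide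


set_option maxHeartbeats 1000000 in
open scoped Classical in
/-- For every `n > 1` there are `Θ(n)` points and `Θ(n)` lines (given as
slope–intercept pairs) whose incidence graph contains no 4-lines/4-points grid cycle
(four distinct lines `ℓ₁,ℓ₂,ℓ₃,ℓ₄` and four distinct points `pᵢ ∈ ℓᵢ ∩ ℓᵢ₊₁`),
yet with at least `Ω(n^{1 + 1/14})` incidences. -/
theorem stmt10 :
    ∃ c₁ c₂ c₃ : ℝ, 0 < c₁ ∧ 0 < c₂ ∧ 0 < c₃ ∧
      ∀ n : ℕ, 1 < n → ∃ P L : Finset (ℝ × ℝ),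
        c₁ * n ≤ (P.card : ℝ) ∧ (P.card : ℝ) ≤ c₂ * n ∧
        c₁ * n ≤ (L.card : ℝ) ∧ (L.card : ℝ) ≤ c₂ * n ∧
        (¬ ∃ (l : Fin 4 → ℝ × ℝ) (p : Fin 4 → ℝ × ℝ),
            Function.Injective l ∧ Function.Injective p ∧
            (∀ i, l i ∈ L) ∧ (∀ i, p i ∈ P) ∧
            (∀ i, (p i).2 = (l i).1 * (p i).1 + (l i).2 ∧
                  (p i).2 = (l (i + 1)).1 * (p i).1 + (l (i + 1)).2)) ∧
        c₃ * (n : ℝ) ^ ((1 : ℝ) + 1 / 14) ≤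
          (((P ×ˢ L).filter fun q => q.1.2 = q.2.1 * q.1.1 + q.2.2).card : ℝ) := by
  refine ⟨1, 10^15, 1, by norm_num, by norm_num, by norm_num, ?_⟩
  intro n hn
  have hn1 : (1:ℝ) < (n:ℝ) := by exact_mod_cast hn
  set x := (n:ℝ) ^ ((1:ℝ)/14) with hxdef
  have hx1 : 1 < x := by
    rw [hxdef]
    rw [Real.one_lt_rpow_iff (by linarith)]
    exact Or.inl ⟨hn1, by norm_num⟩
  have hx0 : 0 ≤ x := by linarith
  set t := ⌈x⌉₊ with htdef
  have ht2 : 2 ≤ t := by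
    have : 1 < t := by rw [htdef, Nat.lt_ceil]; exact_mod_cast hx1
    omega
  have htx : x ≤ (t:ℝ) := Nat.le_ceil x
  have htx2 : (t:ℝ) ≤ 2*x := by
    have := Nat.ceil_lt_add_one hx0
    rw [← htdef] at this
    linarith
  have hx14 : x^(14:ℕ) = (n:ℝ) := by
    rw [hxdef, ← Real.rpow_natCast ((n:ℝ) ^ ((1:ℝ)/14)) 14, ← Real.rpow_mul (by positivity)]
    norm_num
  have hx15 : x^(15:ℕ) = (n:ℝ) ^ ((1:ℝ) + 1/14) := by
    rw [hxdef, ← Real.rpow_natCast ((n:ℝ) ^ ((1:ℝ)/14)) 15, ← Real.rpow_mul (by positivity)]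
    norm_num
  have h14 : (n:ℝ) ≤ (t:ℝ)^14 := by
    rw [← hx14]; exact pow_le_pow_left₀ hx0 htx 14
  have h14' : (t:ℝ)^14 ≤ 16384 * (n:ℝ) := by
    calc (t:ℝ)^14 ≤ (2*x)^14 := pow_le_pow_left₀ (by positivity) htx2 14
      _ = 16384 * x^14 := by rw [mul_pow]; norm_num
      _ = 16384 * (n:ℝ) := by rw [hx14]
  have h15 : (n:ℝ) ^ ((1:ℝ) + 1/14) ≤ (t:ℝ)^15 := by
    rw [← hx15]; exact pow_le_pow_left₀ hx0 htx 15
  -- prime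
  obtain ⟨p, hp, hpt, hpt2⟩ := Nat.exists_prime_lt_and_le_two_mul t (by omega)
  have hodd : 2 < p := by omega
  -- the k-fold Sidon set A
  obtain ⟨A, hAsub, hAcard, hT3, hT4⟩ := greedy (4*p^2) t (by nlinarith [hp.two_le])
  set N := 250 * (4*p^2)^4 * t^3 + 1 with hNdef
  have hNe : N = 64000 * p^8 * t^3 + 1 := by rw [hNdef]; ring
  set Y := 10 * N * (2*p^2) with hYdef
  have hYe : Y = 20 * N * p^2 := by rw [hYdef]; ring
  set M : Finset ℕ := (range p).image (esid p) with hMdef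
  have hMcard : M.card = p := by
    rw [hMdef, card_image_of_injOn, card_range]
    intro i hi j hj hij
    exact esid_inj hp hodd (mem_range.mp hi) (mem_range.mp hj) hij
  set Bs : Finset ℤ := Icc (-((2*p^2 : ℕ) * (N:ℕ) : ℤ)) ((Y:ℕ) : ℤ) with hBdef
  have hBcard : Bs.card = (2*p^2) * N + Y + 1 := by
    rw [hBdef, Int.card_Icc]
    omega
  set Pf : Finset (ℝ × ℝ) := (A.image (fun a : ℕ => (a:ℝ))) ×ˢ
    ((range Y).image (fun y : ℕ => (y:ℝ))) with hPfdef
  set Lf : Finset (ℝ × ℝ) := (M.image (fun m : ℕ => (m:ℝ))) ×ˢ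
    (Bs.image (fun b : ℤ => (b:ℝ))) with hLfdef
  have hPfcard : Pf.card = t * Y := by
    rw [hPfdef, card_product, card_image_of_injective _ Nat.cast_injective,
      card_image_of_injective _ Nat.cast_injective, card_range, hAcard]
  have hLfcard : Lf.card = p * ((2*p^2) * N + Y + 1) := by
    rw [hLfdef, card_product, card_image_of_injective _ Nat.cast_injective,
      card_image_of_injective _ Int.cast_injective, hMcard, hBcard]
  -- numeric bounds (ℕ)
  have htp : t ≤ p := le_of_lt hpt
  have hp2t : p ≤ 2*t := hpt2
  have hN1 : p^8 * t^3 ≤ N := by nlinarith [hNe]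
  have hPlow : t^14 ≤ t * Y := by
    calc t^14 = t * ((t^8 * t^3) * t^2) := by ring
      _ ≤ t * ((p^8 * t^3) * p^2) := by gcongr
      _ ≤ t * (N * p^2) := by gcongr
      _ ≤ t * (20 * N * p^2) := by gcongr; omega
      _ = t * Y := by rw [hYe]
  have hNup : N ≤ 16384001 * t^11 := by
    have hp8 : p^8 ≤ (2*t)^8 := Nat.pow_le_pow_left hp2t 8
    have ht11 : 1 ≤ t^11 := Nat.one_le_pow _ _ (by omega)
    calc N = 64000 * p^8 * t^3 + 1 := hNe
      _ ≤ 64000 * ((2*t)^8) * t^3 + 1 := by gcongr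
      _ = 16384000 * t^11 + 1 := by ring
      _ ≤ 16384001 * t^11 := by omega
  have hYup : Y ≤ 2000000000 * t^13 := by
    have hp2 : p^2 ≤ (2*t)^2 := Nat.pow_le_pow_left hp2t 2
    calc Y = 20 * N * p^2 := hYe
      _ ≤ 20 * (16384001 * t^11) * ((2*t)^2) := by gcongr
      _ = 1310720080 * t^13 := by ring
      _ ≤ 2000000000 * t^13 := by
          have := Nat.one_le_pow 13 t (by omega)
          nlinarith
  have hPup : t * Y ≤ 2000000000 * t^14 := by
    calc t * Y ≤ t * (2000000000 * t^13) := by gcongr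
      _ = 2000000000 * t^14 := by ring
  have hBse : (2*p^2) * N ≤ Y := by
    rw [hYdef]
    calc (2*p^2) * N = 1 * (N * (2*p^2)) := by ring
      _ ≤ 10 * (N * (2*p^2)) := Nat.mul_le_mul_right _ (by norm_num)
      _ = 10 * N * (2*p^2) := by ring
  have hY1 : 1 ≤ Y := by nlinarith [hPlow, Nat.one_le_pow 14 t (by omega), ht2]
  have hLlow : t^14 ≤ p * ((2*p^2) * N + Y + 1) := by
    calc t^14 ≤ t * Y := hPlow
      _ ≤ p * ((2*p^2) * N + Y + 1) := by
          refine Nat.mul_le_mul htp ?_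
          omega
  have hLup : p * ((2*p^2) * N + Y + 1) ≤ 12000000000 * t^14 := by
    calc p * ((2*p^2) * N + Y + 1) ≤ (2*t) * (Y + Y + Y) := by
          refine Nat.mul_le_mul hp2t ?_
          omega
      _ = 6 * (t * Y) := by ring
      _ ≤ 6 * (2000000000 * t^14) := by gcongr
      _ = 12000000000 * t^14 := by ring
  have hIlow : t^15 ≤ t * (Y * p) := by
    calc t^15 = t^14 * t := by ring
      _ ≤ (t*Y) * p := Nat.mul_le_mul hPlow htp
      _ = t * (Y * p) := by ring
  -- cast helpers
  have hnt14 : n ≤ t^14 := by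
    have h1 : (n:ℝ) ≤ ((t^14:ℕ):ℝ) := by push_cast; exact h14
    exact_mod_cast h1
  refine ⟨Pf, Lf, ?_, ?_, ?_, ?_, ?_, ?_⟩
  · rw [hPfcard, one_mul]
    have h1 : ((t^14 : ℕ):ℝ) ≤ ((t*Y : ℕ):ℝ) := by exact_mod_cast hPlow
    have h2 : (n:ℝ) ≤ ((t^14 : ℕ):ℝ) := by exact_mod_cast hnt14
    linarith
  · rw [hPfcard]
    calc ((t*Y : ℕ):ℝ) ≤ ((2000000000 * t^14 : ℕ) : ℝ) := by exact_mod_cast hPup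
      _ = 2000000000 * (t:ℝ)^14 := by push_cast; ring
      _ ≤ 2000000000 * (16384 * n) := by
          have := h14'; nlinarith
      _ ≤ 10^15 * n := by nlinarith [hn1]
  · rw [hLfcard]
    have h1 : ((t^14 : ℕ) : ℝ) ≤ ((p * ((2*p^2) * N + Y + 1) : ℕ) : ℝ) := by exact_mod_cast hLlow
    have h2 : (n:ℝ) ≤ ((t^14 : ℕ):ℝ) := by exact_mod_cast hnt14
    linarith
  · rw [hLfcard]
    calc ((p * ((2*p^2) * N + Y + 1) : ℕ):ℝ) ≤ ((12000000000 * t^14 : ℕ) : ℝ) := by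
          exact_mod_cast hLup
      _ = 12000000000 * (t:ℝ)^14 := by push_cast; ring
      _ ≤ 12000000000 * (16384 * n) := by nlinarith [h14']
      _ ≤ 10^15 * n := by nlinarith [hn1]
  · -- no grid configuration
    rintro ⟨l, pt, hInjL, hInjP, hlL, hpP, hinc⟩
    have hex : ∀ i, ∃ (a y : ℕ), a ∈ A ∧ y < Y ∧ pt i = ((a:ℝ), (y:ℝ)) := by
      intro i
      have hmem := hpP i
      rw [hPfdef, mem_product] at hmem
      obtain ⟨a, ha, ha2⟩ := mem_image.mp hmem.1
      obtain ⟨y, hy, hy2⟩ := mem_image.mp hmem.2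
      exact ⟨a, y, ha, mem_range.mp hy, Prod.ext ha2.symm hy2.symm⟩
    choose a y haA hyY hpt using hex
    have hex2 : ∀ i, ∃ (ix : ℕ) (b : ℤ), ix < p ∧ b ∈ Bs ∧
        l i = ((esid p ix : ℝ), (b:ℝ)) := by
      intro i
      have hmem := hlL i
      rw [hLfdef, mem_product] at hmem
      obtain ⟨m, hm, hm2⟩ := mem_image.mp hmem.1
      rw [hMdef] at hm
      obtain ⟨ix, hix, hix2⟩ := mem_image.mp hm
      obtain ⟨b, hb, hb2⟩ := mem_image.mp hmem.2
      refine ⟨ix, b, mem_range.mp hix, hb, Prod.ext ?_ hb2.symm⟩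
      rw [← hm2, ← hix2]
    choose ix b hixp hbB hline using hex2
    have E1 : ∀ i, (y i : ℤ) = (esid p (ix i) : ℤ) * (a i : ℤ) + b i := by
      intro i
      have h := (hinc i).1
      rw [hpt i, hline i] at h
      dsimp only at h
      exact_mod_cast h
    have E2 : ∀ i, (y i : ℤ) = (esid p (ix (i+1)) : ℤ) * (a i : ℤ) + b (i+1) := by
      intro i
      have h := (hinc i).2
      rw [hpt i, hline (i+1)] at h
      dsimp only at h
      exact_mod_cast h
    have hmne : ∀ i : Fin 4, esid p (ix i) ≠ esid p (ix (i+1)) := by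
      intro i heqm
      have e1 := E1 i
      have e2 := E2 i
      rw [← heqm] at e2
      have hb : b i = b (i+1) := by linarith
      have hll : l i = l (i+1) := by rw [hline i, hline (i+1), heqm, hb]
      exact fin4_ne i (hInjL hll)
    have hmlt : ∀ i, esid p (ix i) < 2*p^2 := fun i => esid_lt hp.pos (hixp i)
    have Ed : ∀ i : Fin 4,
        ((esid p (ix i) : ℤ) - esid p (ix (i+1))) * a i + b i - b (i+1) = 0 :=
      fun i => by linear_combination (E2 i) - (E1 i)
    have hpteq : ∀ i : Fin 4, a i = a (i+1) → False := by
      intro i haeq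
      have e2' := E2 i
      have e1' := E1 (i+1)
      rw [haeq] at e2'
      have hy' : (y i : ℤ) = y (i+1) := by linarith
      have hyy : y i = y (i+1) := by exact_mod_cast hy'
      have : pt i = pt (i+1) := by rw [hpt i, hpt (i+1), haeq, hyy]
      exact fin4_ne i (hInjP this)
    have h01 : (0:Fin 4)+1 = 1 := by decide
    have h12 : (1:Fin 4)+1 = 2 := by decide
    have h23 : (2:Fin 4)+1 = 3 := by decide
    have h30 : (3:Fin 4)+1 = 0 := by decide
    have hm01 : esid p (ix 0) ≠ esid p (ix 1) := by have h := hmne 0; rwa [h01] at h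
    have hm12 : esid p (ix 1) ≠ esid p (ix 2) := by have h := hmne 1; rwa [h12] at h
    have hm23 : esid p (ix 2) ≠ esid p (ix 3) := by have h := hmne 2; rwa [h23] at h
    have hm30 : esid p (ix 3) ≠ esid p (ix 0) := by have h := hmne 3; rwa [h30] at h
    have e0 := Ed 0; rw [h01] at e0
    have e1 := Ed 1; rw [h12] at e1
    have e2 := Ed 2; rw [h23] at e2
    have e3 := Ed 3; rw [h30] at e3
    have habs : ∀ K u v : ℕ, u < K → v < K → |(u:ℤ) - v| ≤ (K:ℤ) := by
      intro K u v hu hv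
      rw [abs_le]
      constructor <;> omega
    have hml0 := hmlt 0
    have hml1 := hmlt 1
    have hml2 := hmlt 2
    have hml3 := hmlt 3
    have h3' : T3 (2*(2*p^2)) A := by rwa [show 2*(2*p^2) = 4*p^2 from by ring]
    have h4' : T4 (2*(2*p^2)) A := by rwa [show 2*(2*p^2) = 4*p^2 from by ring]
    have hcn : ∀ u v : ℕ, u ≠ v → (u:ℤ) - v ≠ 0 := by
      intro u v huv h0
      exact huv (by exact_mod_cast (by linarith : (u:ℤ) = v))
    rcases KS h3' h4' (hcn _ _ hm01) (hcn _ _ hm12) (hcn _ _ hm23) (hcn _ _ hm30)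
      (habs _ _ _ hml0 hml1) (habs _ _ _ hml1 hml2) (habs _ _ _ hml2 hml3)
      (habs _ _ _ hml3 hml0) (by ring)
      (haA 0) (haA 1) (haA 2) (haA 3) (by linarith) with h|h|h|h|⟨hh13, hh24, hc13⟩
    · exact hpteq 0 (by rwa [h01])
    · exact hpteq 1 (by rwa [h12])
    · exact hpteq 2 (by rwa [h23])
    · exact hpteq 3 (by rwa [h30])
    · have hmsum : esid p (ix 0) + esid p (ix 2) = esid p (ix 1) + esid p (ix 3) := by
        omega
      rcases sidon hp hodd (hixp 0) (hixp 2) (hixp 1) (hixp 3) hmsum with ⟨hA1, _⟩|⟨hA1, _⟩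
      · exact hm01 (congrArg (esid p) hA1)
      · exact hm30 (congrArg (esid p) hA1).symm
  · -- incidence count
    set D : Finset (ℕ × ℕ × ℕ) := A ×ˢ (range Y) ×ˢ (range p) with hDdef
    set f : ℕ × ℕ × ℕ → (ℝ×ℝ)×(ℝ×ℝ) := fun q =>
      ((q.1, q.2.1), ((esid p q.2.2 : ℝ),
        (((q.2.1 : ℤ) - (esid p q.2.2 : ℤ) * (q.1 : ℤ) : ℤ) : ℝ))) with hfdef
    have hsubI : D.image f ⊆ (Pf ×ˢ Lf).filter
        (fun q => q.1.2 = q.2.1 * q.1.1 + q.2.2) := by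
      intro z hz
      rw [mem_image] at hz
      obtain ⟨q, hq, rfl⟩ := hz
      rw [hDdef, mem_product, mem_product, mem_range, mem_range] at hq
      obtain ⟨hqa, hqy, hqm⟩ := hq
      rw [mem_filter, mem_product]
      have hma : (esid p q.2.2 : ℤ) * (q.1 : ℤ) ≤ ((2*p^2 : ℕ) * (N:ℕ) : ℤ) := by
        have h1 : (esid p q.2.2 : ℤ) ≤ (2*p^2 : ℕ) := by
          exact_mod_cast le_of_lt (esid_lt hp.pos hqm)
        have h2 : (q.1 : ℤ) ≤ (N : ℕ) := by
          exact_mod_cast le_of_lt (mem_range.mp (hAsub hqa))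
        push_cast at h1 h2 ⊢
        nlinarith [Int.ofNat_nonneg q.1, Int.ofNat_nonneg (esid p q.2.2)]
      refine ⟨⟨?_, ?_⟩, ?_⟩
      · rw [hfdef, hPfdef, mem_product]
        exact ⟨mem_image_of_mem _ hqa, mem_image_of_mem _ (mem_range.mpr hqy)⟩
      · rw [hfdef, hLfdef, mem_product]
        constructor
        · exact mem_image_of_mem _ (hMdef ▸ mem_image_of_mem _ (mem_range.mpr hqm))
        · refine mem_image_of_mem _ ?_
          rw [hBdef, mem_Icc]
          constructor
          · have : (0:ℤ) ≤ (q.2.1 : ℤ) := Int.ofNat_nonneg _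
            linarith
          · have h3 : (q.2.1 : ℤ) ≤ (Y:ℤ) := by exact_mod_cast le_of_lt hqy
            have h4 : (0:ℤ) ≤ (esid p q.2.2 : ℤ) * (q.1 : ℤ) :=
              mul_nonneg (Int.ofNat_nonneg _) (Int.ofNat_nonneg _)
            linarith
      · rw [hfdef]
        push_cast
        ring
    have hinjf : Set.InjOn f D := by
      intro q1 h1 q2 h2 heq
      simp only [Finset.mem_coe] at h1 h2
      rw [hDdef, mem_product, mem_product, mem_range, mem_range] at h1 h2
      rw [hfdef, Prod.mk.injEq, Prod.mk.injEq, Prod.mk.injEq] at heq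
      obtain ⟨⟨ha', hy'⟩, hm', _⟩ := heq
      have ha : q1.1 = q2.1 := Nat.cast_injective ha'
      have hy : q1.2.1 = q2.2.1 := Nat.cast_injective hy'
      have hm : q1.2.2 = q2.2.2 :=
        esid_inj hp hodd h1.2.2 h2.2.2 (Nat.cast_injective hm')
      exact Prod.ext ha (Prod.ext hy hm)
    have hDcard : D.card = t * (Y * p) := by
      rw [hDdef, card_product, card_product, card_range, card_range, hAcard]
    have hcount : t * (Y * p) ≤ ((Pf ×ˢ Lf).filter
        (fun q => q.1.2 = q.2.1 * q.1.1 + q.2.2)).card := by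
      rw [← hDcard, ← Finset.card_image_of_injOn hinjf]
      exact card_le_card hsubI
    have h1 := Nat.cast_le (α := ℝ) |>.mpr (le_trans hIlow hcount)
    have h3 : ((t^15:ℕ):ℝ) = (t:ℝ)^15 := by push_cast; ring
    rw [one_mul]
    exact le_trans h15 (le_trans (le_of_eq h3.symm) h1)
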